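/- Let N ≥ 3 be odd and let B be an N×N skew-symmetric integer matrix such that node 1 is a sink of B, node 2 is a sink of μ₁(B), and μ₂(μ₁(B)) = ρ² B ρ⁻². Then μ₁(B) = ρ B ρ⁻¹ (i.e. B already has period 1). In particular, there are no strictly period 2 sink-type quivers with an odd number of nodes. -/

import Mathlib

open Matrix

/-- The cyclic permutation matrix ρ: ρ_{i+1,i} = 1 (1-based), ρ_{1,N} = 1. -/
def rhoM (N : ℕ) : Matrix (Fin N) (Fin N) ℤ :=
  Matrix.of fun i j => if (i : ℕ) = ((j : ℕ) + 1) % N then 1 else 0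

/-- The skew-rotation τ: equal to ρ except τ_{1,N} = −1. -/
def tauM (N : ℕ) : Matrix (Fin N) (Fin N) ℤ :=
  Matrix.of fun i j =>
    if (i : ℕ) = ((j : ℕ) + 1) % N then (if (j : ℕ) + 1 = N then -1 else 1) else 0

/-- Fomin–Zelevinsky matrix mutation at node `k`. -/
def mutB {N : ℕ} (k : Fin N) (B : Matrix (Fin N) (Fin N) ℤ) : Matrix (Fin N) (Fin N) ℤ :=
  Matrix.of fun i j =>
    if i = k ∨ j = k then -B i j
    else B i j + (|B i k| * B k j + B i k * |B k j|) / 2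

/-- Node `k` is a sink of `B` if all entries of column `k` are nonnegative. -/
def IsSink {N : ℕ} (k : Fin N) (B : Matrix (Fin N) (Fin N) ℤ) : Prop :=
  ∀ i, 0 ≤ B i k

/-! ### Auxiliary lemmas -/

/-- sign function: `-1` at `z`, `+1` elsewhere. -/
def sgnE {N : ℕ} (z i : Fin N) : ℤ := if i = z then -1 else 1
/-- sign function `(-1)^i`. -/
def sgnH {N : ℕ} (i : Fin N) : ℤ := if Even (i : ℕ) then 1 else -1

theorem sgnH_sq {N : ℕ} (i : Fin N) : sgnH i * sgnH i = 1 := by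
  unfold sgnH; split <;> norm_num

/-- Mutation at a sink merely flips the signs of the corresponding row and column. -/
theorem sink_mut {N : ℕ} (k : Fin N) (B : Matrix (Fin N) (Fin N) ℤ)
    (hskew : ∀ i j, B j i = -B i j) (hsink : ∀ i, 0 ≤ B i k) (i j : Fin N) :
    mutB k B i j = (if i = k then (-1:ℤ) else 1) * (if j = k then (-1:ℤ) else 1) * B i j := by
  by_cases hi : i = k <;> by_cases hj : j = k
  · have h0 : B k k = 0 := by have := hskew k k; omega
    simp only [mutB, Matrix.of_apply, hi, hj, if_pos rfl, or_self, if_pos]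
    rw [h0]; ring
  · simp only [mutB, Matrix.of_apply, hi, if_neg hj, true_or, or_true, if_true, if_pos rfl]; ring
  · simp only [mutB, Matrix.of_apply, hj, if_neg hi, true_or, or_true, if_true, if_pos rfl]; ring
  · have h1 : 0 ≤ B i k := hsink i
    have h2 : B k j ≤ 0 := by have := hsink j; have := hskew j k; omega
    have hne : ¬(i = k ∨ j = k) := by tauto
    simp only [mutB, Matrix.of_apply, if_neg hne, if_neg hi, if_neg hj]
    rw [abs_of_nonneg h1, abs_of_nonpos h2]
    have hz : (B i k * B k j + B i k * -B k j) = 0 := by ring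
    rw [hz]
    simp

theorem rho_apply' {N : ℕ} (hN : 3 ≤ N) (o1 : Fin N) (ho1 : (o1 : ℕ) = 1)
    (i k : Fin N) : rhoM N i k = if k = i - o1 then 1 else 0 := by
  haveI : NeZero N := ⟨by omega⟩
  have key : ((i : ℕ) = ((k : ℕ) + 1) % N) ↔ (k = i - o1) := by
    rw [eq_sub_iff_add_eq, Fin.ext_iff, Fin.add_def, ho1]
    show (i : ℕ) = ((k : ℕ) + 1) % N ↔ ((k : ℕ) + 1) % N = (i : ℕ)
    exact eq_comm
  rw [rhoM]
  simp only [Matrix.of_apply]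
  rw [if_congr key rfl rfl]

theorem rho_mul_apply {N : ℕ} (hN : 3 ≤ N) (o1 : Fin N) (ho1 : (o1 : ℕ) = 1)
    (M : Matrix (Fin N) (Fin N) ℤ) (i j : Fin N) :
    (rhoM N * M) i j = M (i - o1) j := by
  rw [Matrix.mul_apply]
  simp_rw [rho_apply' hN o1 ho1]
  simp only [ite_mul, one_mul, zero_mul, Finset.sum_ite_eq', Finset.mem_univ, if_true]

theorem mul_rhoT_apply {N : ℕ} (hN : 3 ≤ N) (o1 : Fin N) (ho1 : (o1 : ℕ) = 1)
    (M : Matrix (Fin N) (Fin N) ℤ) (i j : Fin N) :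
    (M * (rhoM N)ᵀ) i j = M i (j - o1) := by
  rw [Matrix.mul_apply]
  simp only [Matrix.transpose_apply]
  simp_rw [rho_apply' hN o1 ho1]
  simp only [mul_ite, mul_one, mul_zero, Finset.sum_ite_eq', Finset.mem_univ, if_true]

theorem rho_inv {N : ℕ} (hN : 3 ≤ N) : (rhoM N)⁻¹ = (rhoM N)ᵀ := by
  haveI : NeZero N := ⟨by omega⟩
  have ho1 : ((⟨1, by omega⟩ : Fin N) : ℕ) = 1 := rfl
  apply Matrix.inv_eq_right_inv
  ext i j
  rw [mul_rhoT_apply hN _ ho1, rho_apply' hN _ ho1, Matrix.one_apply]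
  simp [sub_left_inj, eq_comm]

theorem cocycle {N : ℕ} (hN : 3 ≤ N) (hodd : Odd N) (o1 z0 : Fin N)
    (ho1 : (o1 : ℕ) = 1) (hz0 : (z0 : ℕ) = 0) (i : Fin N) :
    sgnH (i + o1 + o1) =
      (sgnE o1 (i + o1 + o1) * sgnE z0 (i + o1 + o1)) * sgnH i := by
  obtain ⟨t, ht⟩ := hodd
  have hvi := i.isLt
  have h2v : ((i + o1 + o1 : Fin N) : ℕ) = ((i : ℕ) + 2) % N := by
    rw [Fin.add_def, Fin.add_def]
    show (((i : ℕ) + (o1 : ℕ)) % N + (o1 : ℕ)) % N = _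
    rw [ho1, Nat.mod_add_mod]
  by_cases hlt : (i : ℕ) + 2 < N
  · have hv : ((i + o1 + o1 : Fin N) : ℕ) = (i : ℕ) + 2 := by
      rw [h2v]; exact Nat.mod_eq_of_lt hlt
    have hne1 : i + o1 + o1 ≠ o1 := by
      intro h; apply_fun Fin.val at h; omega
    have hne0 : i + o1 + o1 ≠ z0 := by
      intro h; apply_fun Fin.val at h; omega
    have hpar : Even ((i + o1 + o1 : Fin N) : ℕ) ↔ Even (i : ℕ) := by
      rw [Nat.even_iff, Nat.even_iff]; omega
    unfold sgnH sgnE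
    rw [if_neg hne1, if_neg hne0]
    by_cases he : Even (i : ℕ)
    · rw [if_pos (hpar.mpr he), if_pos he]; ring
    · rw [if_neg (fun h => he (hpar.mp h)), if_neg he]; ring
  · have hcase : (i : ℕ) = N - 2 ∨ (i : ℕ) = N - 1 := by omega
    rcases hcase with h | h
    · have hv : ((i + o1 + o1 : Fin N) : ℕ) = 0 := by
        rw [h2v]; have e : (i : ℕ) + 2 = N := by omega
        rw [e, Nat.mod_self]
      have hne1 : i + o1 + o1 ≠ o1 := by
        intro hh; apply_fun Fin.val at hh; omega
      have heq0 : i + o1 + o1 = z0 := by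
        apply Fin.ext; omega
      have he1 : Even ((i + o1 + o1 : Fin N) : ℕ) := by
        rw [Nat.even_iff]; omega
      have he2 : ¬ Even (i : ℕ) := by
        rw [Nat.even_iff]; omega
      unfold sgnH sgnE
      rw [if_neg hne1, if_pos heq0, if_pos he1, if_neg he2]; ring
    · have hv : ((i + o1 + o1 : Fin N) : ℕ) = 1 := by
        rw [h2v]; have e : (i : ℕ) + 2 = N + 1 := by omega
        rw [e, Nat.add_mod_left]; exact Nat.mod_eq_of_lt (by omega)
      have heq1 : i + o1 + o1 = o1 := by apply Fin.ext; omega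
      have hne0 : i + o1 + o1 ≠ z0 := by
        intro hh; apply_fun Fin.val at hh; omega
      have he1 : ¬ Even ((i + o1 + o1 : Fin N) : ℕ) := by
        rw [Nat.even_iff]; omega
      have he2 : Even (i : ℕ) := by rw [Nat.even_iff]; omega
      unfold sgnH sgnE
      rw [if_pos heq1, if_neg hne0, if_neg he1, if_pos he2]; ring

theorem subone {N : ℕ} (hN : 3 ≤ N) (hodd : Odd N) (o1 z0 : Fin N)
    (ho1 : (o1 : ℕ) = 1) (hz0 : (z0 : ℕ) = 0) (i : Fin N) :
    sgnH (i - o1) * sgnH i = - sgnE z0 i := by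
  obtain ⟨t, ht⟩ := hodd
  have hvi := i.isLt
  have hv : ((i - o1 : Fin N) : ℕ) = (N - 1 + (i : ℕ)) % N := by
    rw [Fin.sub_def]
    show (N - (o1 : ℕ) + (i : ℕ)) % N = _
    rw [ho1]
  by_cases h0 : (i : ℕ) = 0
  · have hv' : ((i - o1 : Fin N) : ℕ) = N - 1 := by
      rw [hv, h0]; exact Nat.mod_eq_of_lt (by omega)
    have he1 : Even ((i - o1 : Fin N) : ℕ) := by rw [Nat.even_iff]; omega
    have he2 : Even (i : ℕ) := by rw [Nat.even_iff]; omega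
    have heq : i = z0 := by apply Fin.ext; omega
    unfold sgnH sgnE
    rw [if_pos he1, if_pos he2, if_pos heq]; ring
  · have hv' : ((i - o1 : Fin N) : ℕ) = (i : ℕ) - 1 := by
      rw [hv]
      have e : N - 1 + (i : ℕ) = N + ((i : ℕ) - 1) := by omega
      rw [e, Nat.add_mod_left]; exact Nat.mod_eq_of_lt (by omega)
    have hne : i ≠ z0 := by intro hh; apply_fun Fin.val at hh; omega
    have hpar : Even ((i - o1 : Fin N) : ℕ) ↔ ¬ Even (i : ℕ) := by
      rw [Nat.even_iff, Nat.even_iff]; omega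
    unfold sgnH sgnE
    rw [if_neg hne]
    by_cases he : Even (i : ℕ)
    · rw [if_neg (fun h => (hpar.mp h) he), if_pos he]; ring
    · rw [if_pos (hpar.mpr he), if_neg he]; ring

open Fin.NatCast

/-- For odd `N`, a sink-type period 2 matrix already has period 1: there are no
strictly period 2 sink-type quivers with an odd number of nodes. -/
theorem stmt5 (N : ℕ) (hN : 3 ≤ N) (hodd : Odd N) (B : Matrix (Fin N) (Fin N) ℤ)
    (hskew : Bᵀ = -B) (hsink1 : IsSink ⟨0, by omega⟩ B)
    (hsink2 : IsSink ⟨1, by omega⟩ (mutB ⟨0, by omega⟩ B))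
    (hper : mutB ⟨1, by omega⟩ (mutB ⟨0, by omega⟩ B)
            = rhoM N ^ 2 * B * ((rhoM N)⁻¹) ^ 2) :
    mutB ⟨0, by omega⟩ B = rhoM N * B * (rhoM N)⁻¹ := by
  haveI : NeZero N := ⟨by omega⟩
  suffices h : ∀ (z0 o1 : Fin N), (z0 : ℕ) = 0 → (o1 : ℕ) = 1 → IsSink z0 B →
      IsSink o1 (mutB z0 B) →
      mutB o1 (mutB z0 B) = rhoM N ^ 2 * B * ((rhoM N)⁻¹) ^ 2 →
      mutB z0 B = rhoM N * B * (rhoM N)⁻¹ by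
    exact h ⟨0, by omega⟩ ⟨1, by omega⟩ rfl rfl hsink1 hsink2 hper
  intro z0 o1 hz0 ho1 hs1 hs2 hper'
  rw [rho_inv hN] at hper' ⊢
  have hsk : ∀ i j, B j i = -B i j := fun i j => by
    have := congrFun (congrFun hskew i) j; simpa using this
  have fold : ∀ (a b : Fin N), (if a = b then (-1:ℤ) else 1) = sgnE b a := fun _ _ => rfl
  -- step 1 : the first mutation flips the signs of row and column z0
  have hA : ∀ i j, mutB z0 B i j = sgnE z0 i * sgnE z0 j * B i j := by
    intro i j; rw [sink_mut z0 B hsk hs1 i j, fold, fold]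
  have hskA : ∀ i j, (mutB z0 B) j i = -(mutB z0 B) i j := by
    intro i j; rw [hA, hA, hsk i j]; ring
  -- step 2 : the second mutation flips the signs of row and column o1
  have hB2 : ∀ i j, mutB o1 (mutB z0 B) i j =
      (sgnE o1 i * sgnE z0 i) * (sgnE o1 j * sgnE z0 j) * B i j := by
    intro i j
    rw [sink_mut o1 (mutB z0 B) hskA hs2 i j, fold, fold, hA i j]
    ring
  -- step 3 : entries of the conjugation by ρ²
  have hRR : ∀ i j, (rhoM N ^ 2 * B * ((rhoM N)ᵀ) ^ 2) i j
      = B (i - o1 - o1) (j - o1 - o1) := by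
    intro i j
    have hassoc : rhoM N ^ 2 * B * ((rhoM N)ᵀ) ^ 2
        = rhoM N * (rhoM N * B * (rhoM N)ᵀ) * (rhoM N)ᵀ := by
      rw [pow_two, pow_two]; simp only [Matrix.mul_assoc]
    rw [hassoc, mul_rhoT_apply hN o1 ho1, rho_mul_apply hN o1 ho1,
        mul_rhoT_apply hN o1 ho1, rho_mul_apply hN o1 ho1]
  -- step 4 : the periodicity hypothesis, entrywise, in forward form
  have hkey : ∀ i j, (sgnE o1 i * sgnE z0 i) * (sgnE o1 j * sgnE z0 j) * B i j
      = B (i - o1 - o1) (j - o1 - o1) := by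
    intro i j
    exact (hB2 i j).symm.trans ((congrFun (congrFun hper' i) j).trans (hRR i j))
  have hfwd : ∀ i j : Fin N, B i j =
      (sgnE o1 (i + o1 + o1) * sgnE z0 (i + o1 + o1)) *
      (sgnE o1 (j + o1 + o1) * sgnE z0 (j + o1 + o1)) *
      B (i + o1 + o1) (j + o1 + o1) := by
    intro i j
    have h := hkey (i + o1 + o1) (j + o1 + o1)
    rw [add_sub_cancel_right, add_sub_cancel_right, add_sub_cancel_right,
        add_sub_cancel_right] at h
    exact h.symm
  -- step 5 : the twisted matrix sgnH i * sgnH j * B i j is invariant under shift by 2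
  have step : ∀ a b : Fin N, sgnH a * sgnH b * B a b
      = sgnH (a + o1 + o1) * sgnH (b + o1 + o1) * B (a + o1 + o1) (b + o1 + o1) := by
    intro a b
    rw [hfwd a b, cocycle hN hodd o1 z0 ho1 hz0 a, cocycle hN hodd o1 z0 ho1 hz0 b]
    ring
  -- step 6 : iterate; since N is odd, shift by 2 generates shift by 1
  have iter : ∀ m : ℕ, ∀ a b : Fin N, sgnH a * sgnH b * B a b
      = sgnH (a + ((2 * m : ℕ) : Fin N)) * sgnH (b + ((2 * m : ℕ) : Fin N)) *
        B (a + ((2 * m : ℕ) : Fin N)) (b + ((2 * m : ℕ) : Fin N)) := by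
    intro m
    induction m with
    | zero => intro a b; simp
    | succ m ih =>
      intro a b
      have h1 : (1 : Fin N) = o1 := by
        apply Fin.ext; rw [Fin.val_one', ho1]
        exact Nat.mod_eq_of_lt (by omega)
      have hc : ((2 * (m + 1) : ℕ) : Fin N) = ((2 * m : ℕ) : Fin N) + o1 + o1 := by
        rw [show 2 * (m + 1) = 2 * m + 1 + 1 by ring]
        push_cast
        rw [h1]
      rw [hc]
      simp only [← add_assoc]
      exact (ih a b).trans (step _ _)
  have hhalf : ((2 * ((N + 1) / 2) : ℕ) : Fin N) = o1 := by
    obtain ⟨t, ht⟩ := hodd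
    have h2 : 2 * ((N + 1) / 2) = N + 1 := by omega
    rw [h2]
    apply Fin.ext
    rw [Fin.val_natCast, ho1, Nat.add_mod_left]
    exact Nat.mod_eq_of_lt (by omega)
  have shift1 : ∀ a b : Fin N, sgnH a * sgnH b * B a b
      = sgnH (a + o1) * sgnH (b + o1) * B (a + o1) (b + o1) := by
    intro a b
    have h := iter ((N + 1) / 2) a b
    rwa [hhalf] at h
  -- step 7 : conclude
  ext i j
  rw [mul_rhoT_apply hN o1 ho1, rho_mul_apply hN o1 ho1, hA i j]
  have e1 := shift1 (i - o1) (j - o1)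
  rw [sub_add_cancel, sub_add_cancel] at e1
  have q1 : sgnE z0 i = -(sgnH (i - o1) * sgnH i) := by
    have := subone hN hodd o1 z0 ho1 hz0 i; linarith
  have q2 : sgnE z0 j = -(sgnH (j - o1) * sgnH j) := by
    have := subone hN hodd o1 z0 ho1 hz0 j; linarith
  calc sgnE z0 i * sgnE z0 j * B i j
      = (sgnH (i - o1) * sgnH (j - o1)) * (sgnH i * sgnH j * B i j) := by
        rw [q1, q2]; ring
    _ = (sgnH (i - o1) * sgnH (j - o1)) *
        (sgnH (i - o1) * sgnH (j - o1) * B (i - o1) (j - o1)) := by rw [← e1]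
    _ = (sgnH (i - o1) * sgnH (i - o1)) * (sgnH (j - o1) * sgnH (j - o1)) *
        B (i - o1) (j - o1) := by ring
    _ = B (i - o1) (j - o1) := by rw [sgnH_sq, sgnH_sq]; ring
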